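/- Any c-intersecting hypergraph in which every edge has at least 2 vertices is properly (3+c)-colorable. -/
import Mathlib


/-- Any c-intersecting hypergraph in which every edge has at least 2 vertices is
properly (3+c)-colorable. -/
theorem stmt1 {V : Type*} [Fintype V] [DecidableEq V] (c : ℕ)
    (H : Finset (Finset V))
    (hint : ∀ A ∈ H, (H.filter fun B => B ≠ A ∧ A ∩ B = ∅).card ≤ c)
    (hcard : ∀ A ∈ H, 2 ≤ A.card) :
    ∃ χ : V → Fin (3 + c), ∀ A ∈ H, ∃ u ∈ A, ∃ w ∈ A, χ u ≠ χ w := by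
  classical
  rcases H.eq_empty_or_nonempty with rfl | hHne
  · exact ⟨fun _ => ⟨0, by omega⟩, by simp⟩
  obtain ⟨A0, hA0, hmin⟩ := H.exists_min_image Finset.card hHne
  have h2 : 2 ≤ A0.card := hcard A0 hA0
  obtain ⟨u, hu⟩ : A0.Nonempty := Finset.card_pos.mp (by omega)
  set D := H.filter (fun B => B ≠ A0 ∧ A0 ∩ B = ∅) with hD
  have hDc : D.card ≤ c := hint A0 hA0
  have hne : ∀ B ∈ D, B.Nonempty := by
    intro B hB
    have := hcard B (Finset.mem_filter.mp hB).1
    exact Finset.card_pos.mp (by omega)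
  have hdisj : ∀ B ∈ D, ∀ x ∈ B, x ∉ A0 := by
    intro B hB x hx hxA0
    have h := (Finset.mem_filter.mp hB).2.2
    have : x ∈ A0 ∩ B := Finset.mem_inter.mpr ⟨hxA0, hx⟩
    rw [h] at this
    exact absurd this (Finset.notMem_empty x)
  let b : {B // B ∈ D} → V := fun B => (hne B B.2).choose
  have hb : ∀ B : {B // B ∈ D}, b B ∈ (B : Finset V) := fun B => (hne B B.2).choose_spec
  set S := D.attach.image b with hS
  have hScard : S.card ≤ c := le_trans Finset.card_image_le (by simpa using hDc)
  have hSA0 : ∀ x ∈ S, x ∉ A0 := by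
    intro x hx
    obtain ⟨B, _, rfl⟩ := Finset.mem_image.mp hx
    exact hdisj B B.2 (b B) (hb B)
  obtain ⟨e⟩ : Nonempty ({x // x ∈ S} ↪ Fin c) := by
    apply Function.Embedding.nonempty_of_card_le
    simpa using hScard
  set χ : V → Fin (3 + c) := fun x =>
    if x = u then ⟨0, by omega⟩
    else if x ∈ A0 then ⟨1, by omega⟩
    else if hx : x ∈ S then ⟨3 + (e ⟨x, hx⟩).val, by have := (e ⟨x, hx⟩).isLt; omega⟩
    else ⟨2, by omega⟩ with hχ
  have hval_lo : ∀ x ∈ A0, (χ x).val ≤ 1 := by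
    intro x hx
    simp only [hχ]
    by_cases h : x = u <;> simp [h, hx]
  have hval_hi : ∀ x, x ∉ A0 → 2 ≤ (χ x).val := by
    intro x hx
    have hxu : x ≠ u := fun h => hx (h ▸ hu)
    simp only [hχ, hxu, if_false, hx, if_false]
    by_cases h : x ∈ S <;> simp [h] <;> omega
  refine ⟨χ, fun A hA => ?_⟩
  by_cases hAA0 : A = A0
  · subst hAA0
    obtain ⟨v, hv, hvu⟩ := Finset.exists_mem_ne (s := A) (by omega) u
    refine ⟨u, hu, v, hv, ?_⟩
    have h1 : χ u = ⟨0, by omega⟩ := by simp [hχ]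
    have h2 : χ v = ⟨1, by omega⟩ := by simp [hχ, hvu, hv]
    rw [h1, h2]; intro h; exact absurd (congrArg Fin.val h) (by simp)
  by_cases hdis : A0 ∩ A = ∅
  · -- A ∈ D
    have hAD : A ∈ D := Finset.mem_filter.mpr ⟨hA, hAA0, hdis⟩
    set x := b ⟨A, hAD⟩ with hx
    have hxA : x ∈ A := hb ⟨A, hAD⟩
    have hxS : x ∈ S := Finset.mem_image.mpr ⟨⟨A, hAD⟩, Finset.mem_attach _ _, rfl⟩
    obtain ⟨w, hw, hwx⟩ := Finset.exists_mem_ne (s := A) (by have := hcard A hA; omega) x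
    refine ⟨x, hxA, w, hw, ?_⟩
    have hxA0 : x ∉ A0 := hdisj A hAD x hxA
    have hwA0 : w ∉ A0 := hdisj A hAD w hw
    have hxu : x ≠ u := fun h => hxA0 (h ▸ hu)
    have hwu : w ≠ u := fun h => hwA0 (h ▸ hu)
    have hχx : χ x = ⟨3 + (e ⟨x, hxS⟩).val, by have := (e ⟨x, hxS⟩).isLt; omega⟩ := by
      simp [hχ, hxu, hxA0, hxS]
    by_cases hwS : w ∈ S
    · have hχw : χ w = ⟨3 + (e ⟨w, hwS⟩).val, by have := (e ⟨w, hwS⟩).isLt; omega⟩ := by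
        simp [hχ, hwu, hwA0, hwS]
      rw [hχx, hχw]
      intro h
      have hv := congrArg Fin.val h
      simp only at hv
      have : (⟨x, hxS⟩ : {x // x ∈ S}) = ⟨w, hwS⟩ := e.injective (Fin.ext (by omega))
      exact hwx (congrArg Subtype.val this).symm
    · have hχw : χ w = ⟨2, by omega⟩ := by simp [hχ, hwu, hwA0, hwS]
      rw [hχx, hχw]
      intro h
      have hv := congrArg Fin.val h
      simp only at hv
      omega
  · -- A meets A0
    obtain ⟨a, ha⟩ : (A0 ∩ A).Nonempty := Finset.nonempty_iff_ne_empty.mpr hdis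
    obtain ⟨haA0, haA⟩ := Finset.mem_inter.mp ha
    have hnotsub : ¬ A ⊆ A0 := by
      intro hsub
      exact hAA0 (Finset.eq_of_subset_of_card_le hsub (hmin A hA))
    obtain ⟨w, hw, hwA0⟩ := Finset.not_subset.mp hnotsub
    refine ⟨a, haA, w, hw, ?_⟩
    intro h
    have h1 := hval_lo a haA0
    have h2 := hval_hi w hwA0
    rw [h] at h1
    omega
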